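/- Every Kurepa tree 𝐓 admits a transversal ⟨t_α | α < ω₁⟩ ∈ ∏_{α<ω₁} T_α such that for every cofinal branch f ∈ B(𝐓) the set G(f) := {α < ω₁ | f↾α = t_α} is uncountable. -/

import Mathlib

noncomputable section

open Cardinal Set

/-- The first uncountable ordinal `ω₁`. -/
def omega1 : Ordinal := (Cardinal.aleph 1).ord

/-- A transfinite binary sequence: a function `t : α → 2` for some ordinal `α`. -/
abbrev BinSeq : Type 1 := Σ α : Ordinal, (Set.Iio α → Bool)

namespace BinSeq

/-- The restriction `t ↾ β` of a binary sequence `t` to an initial segment of its domain. -/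
def restrict (t : BinSeq) (β : Ordinal) (h : β ≤ t.1) : BinSeq :=
  ⟨β, fun x => t.2 ⟨x.1, lt_of_lt_of_le x.2 h⟩⟩

/-- `s.sub t`: `s` is an initial segment of `t` (that is, `s ⊆ t`). -/
def sub (s t : BinSeq) : Prop := ∃ h : s.1 ≤ t.1, t.restrict s.1 h = s

/-- `s.ssub t`: `s` is a proper initial segment of `t` (that is, `s ⊊ t`). -/
def ssub (s t : BinSeq) : Prop := ∃ h : s.1 < t.1, t.restrict s.1 h.le = s

end BinSeq

/-- A candidate branch: a function `f : ω₁ → 2`. -/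
abbrev BinBranch : Type 1 := Set.Iio omega1 → Bool

/-- The restriction `f ↾ α` of `f : ω₁ → 2` to an ordinal `α < ω₁`. -/
def BinBranch.restrict (f : BinBranch) (α : Ordinal) (h : α < omega1) : BinSeq :=
  ⟨α, fun x => f ⟨x.1, lt_trans x.2 h⟩⟩

/-- `C` is a closed unbounded (club) subset of `ω₁`: it is a set of countable ordinals,
unbounded in `ω₁`, and closed under suprema of bounded nonempty subsets. -/
def IsClubBelow (C : Set Ordinal) : Prop :=
  C ⊆ Set.Iio omega1 ∧
  (∀ β < omega1, ∃ α ∈ C, β < α) ∧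
  (∀ s : Set Ordinal, s ⊆ C → s.Nonempty → sSup s < omega1 → sSup s ∈ C)

/-- `S` is a stationary subset of `ω₁`: it meets every club subset of `ω₁`. -/
def IsStationaryBelow (S : Set Ordinal) : Prop :=
  ∀ C : Set Ordinal, IsClubBelow C → (S ∩ C).Nonempty

/-- `T` is a binary ℵ₁-tree: a downward closed family of binary sequences of
countable length, all of whose levels are countable. -/
structure IsBinaryAleph1Tree (T : Set BinSeq) : Prop where
  dom_lt : ∀ t ∈ T, t.1 < omega1
  downward_closed : ∀ t ∈ T, ∀ β, ∀ h : β ≤ t.1, t.restrict β h ∈ T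
  countable_levels : ∀ α < omega1, {t | t ∈ T ∧ t.1 = α}.Countable

/-- The set of cofinal branches of a binary tree:
functions `f : ω₁ → 2` all of whose initial segments lie in `T`. -/
def BinBranches (T : Set BinSeq) : Set BinBranch :=
  {f | ∀ α, ∀ h : α < omega1, f.restrict α h ∈ T}

/-- A binary Kurepa tree: a binary ℵ₁-tree with at least ℵ₂-many cofinal branches. -/
def IsBinaryKurepa (T : Set BinSeq) : Prop :=
  IsBinaryAleph1Tree T ∧ Cardinal.aleph 2 ≤ #(↥(BinBranches T))

/-- `◇(T)` for a binary tree `T`: there is a transversal `⟨t_α | α < ω₁⟩` with `t_α ∈ T_α`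
such that for every cofinal branch `f` of `T`, the set `{α < ω₁ | f ↾ α = t_α}` is stationary. -/
def BinDiamond (T : Set BinSeq) : Prop :=
  ∃ t : Ordinal → BinSeq,
    (∀ α < omega1, t α ∈ T ∧ (t α).1 = α) ∧
    ∀ f ∈ BinBranches T,
      IsStationaryBelow {α | ∃ h : α < omega1, BinBranch.restrict f α h = t α}

/-- An abstract tree: a strict partial order in which the set of predecessors
of every point is well-ordered. -/
structure OTree where
  carrier : Type
  lt : carrier → carrier → Prop
  lt_trans : ∀ {x y z}, lt x y → lt y z → lt x z
  lt_irrefl : ∀ x, ¬ lt x x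
  pred_wellOrder : ∀ x, IsWellOrder {y // lt y x} fun a b => lt a.1 b.1

namespace OTree

/-- The height of a node: the order type of its set of predecessors. -/
def height (t : OTree) (x : t.carrier) : Ordinal :=
  @Ordinal.type {y // t.lt y x} (fun a b => t.lt a.1 b.1) (t.pred_wellOrder x)

/-- The `α`-th level of the tree. -/
def level (t : OTree) (α : Ordinal) : Set t.carrier := {x | t.height x = α}

/-- An ℵ₁-tree: a tree of height `ω₁` all of whose levels are countable. -/
def IsAleph1Tree (t : OTree) : Prop :=
  (∀ x, t.height x < omega1) ∧
  (∀ α < omega1, (t.level α).Nonempty) ∧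
  (∀ α < omega1, (t.level α).Countable)

/-- A tree is Hausdorff if nodes of the same limit height
with the same predecessors are equal. -/
def Hausdorff (t : OTree) : Prop :=
  ∀ x y : t.carrier, Order.IsSuccLimit (t.height x) → t.height x = t.height y →
    {z | t.lt z x} = {z | t.lt z y} → x = y

/-- The set of cofinal branches: uncountable maximal chains. -/
def branches (t : OTree) : Set (Set t.carrier) :=
  {C | IsMaxChain t.lt C ∧ ¬ C.Countable}

/-- A Kurepa tree: an ℵ₁-tree with at least ℵ₂-many cofinal branches. -/
def IsKurepa (t : OTree) : Prop :=
  t.IsAleph1Tree ∧ Cardinal.aleph 2 ≤ #(↥t.branches)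

/-- `◇(𝐓)`: there is a transversal `⟨b_α | α < ω₁⟩` with `b_α ∈ T_α` such that for every
cofinal branch `f`, the set `{α < ω₁ | f ↾ α = b_α}` (i.e. the set of `α < ω₁` such that
`b_α` is the unique element of `f` on the `α`-th level) is stationary. -/
def Diamond (t : OTree) : Prop :=
  ∃ b : Ordinal → t.carrier,
    (∀ α < omega1, b α ∈ t.level α) ∧
    ∀ f ∈ t.branches,
      IsStationaryBelow {α | α < omega1 ∧ f ∩ t.level α = {b α}}

/-- A tree has height `ω₁` if every node has countable height
and every countable level is nonempty. -/
def HasHeightOmega1 (t : OTree) : Prop :=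
  (∀ x, t.height x < omega1) ∧ ∀ α < omega1, (t.level α).Nonempty

end OTree

/-! ### Auxiliary lemmas for Statement 7 -/

section St7Aux

/-- The height of a predecessor `y` of `x` equals the `typein` of `y` in the
well-order of predecessors of `x`. -/
theorem st7_height_typein (t : OTree) {x y : t.carrier} (h : t.lt y x) :
    t.height y =
      (@Ordinal.typein {z // t.lt z x} (fun a b => t.lt a.1 b.1) (t.pred_wellOrder x))
        ⟨y, h⟩ := by
  letI := t.pred_wellOrder x
  letI := t.pred_wellOrder y
  rw [← Ordinal.type_subrel]
  apply Ordinal.type_eq.2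
  refine ⟨RelIso.mk (Equiv.mk
    (fun z => ⟨⟨z.1, t.lt_trans z.2 h⟩, z.2⟩)
    (fun w => ⟨w.1.1, w.2⟩) (fun z => rfl) (fun w => rfl)) ?_⟩
  intro a b
  exact Iff.rfl

/-- Heights are strictly monotone along the tree order. -/
theorem st7_height_lt (t : OTree) {x y : t.carrier} (h : t.lt y x) :
    t.height y < t.height x := by
  letI := t.pred_wellOrder x
  rw [st7_height_typein t h]
  exact Ordinal.typein_lt_type _ _

/-- Every ordinal below the height of a node is the height of some predecessor. -/
theorem st7_exists_pred (t : OTree) {x : t.carrier} {β : Ordinal}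
    (hβ : β < t.height x) : ∃ y, t.lt y x ∧ t.height y = β := by
  letI := t.pred_wellOrder x
  obtain ⟨a, ha⟩ := Ordinal.typein_surj (fun a b : {z // t.lt z x} => t.lt a.1 b.1) hβ
  exact ⟨a.1, a.2, by rw [st7_height_typein t a.2]; exact ha⟩

/-- A maximal chain is downward closed. -/
theorem st7_branch_downward (t : OTree) {f : Set t.carrier}
    (hf : IsMaxChain t.lt f) {x y : t.carrier} (hx : x ∈ f) (h : t.lt y x) :
    y ∈ f := by
  have hchain : IsChain t.lt (insert y f) := by
    apply hf.1.insert
    intro b hb hne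
    rcases eq_or_ne b x with rfl | hbx
    · exact Or.inl h
    · rcases hf.1 hb hx hbx with hbX | hxb
      · letI := t.pred_wellOrder x
        rcases @trichotomous _ (fun a b : {z // t.lt z x} => t.lt a.1 b.1) _
            ⟨y, h⟩ ⟨b, hbX⟩ with h1 | h2 | h3
        · exact Or.inl h1
        · exact absurd (congrArg Subtype.val h2) hne
        · exact Or.inr h3
      · exact Or.inl (t.lt_trans h hxb)
  have heq := hf.2 hchain (Set.subset_insert y f)
  rw [heq]
  exact Set.mem_insert y f

/-- Two elements of a chain with the same height are equal. -/
theorem st7_height_inj (t : OTree) {f : Set t.carrier} (hc : IsChain t.lt f)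
    {x y : t.carrier} (hx : x ∈ f) (hy : y ∈ f)
    (hxy : t.height x = t.height y) : x = y := by
  by_contra hne
  rcases hc hx hy hne with h | h
  · exact absurd hxy (ne_of_lt (st7_height_lt t h))
  · exact absurd hxy.symm (ne_of_lt (st7_height_lt t h))

theorem st7_lt_omega1_iff {β : Ordinal} : β < omega1 ↔ β.card ≤ ℵ₀ := by
  rw [omega1, Cardinal.lt_ord, ← Cardinal.succ_aleph0, Order.lt_succ_iff]

/-- An initial segment of the ordinals below `ω₁` is countable. -/
theorem st7_countable_Iic {β : Ordinal.{0}} (hβ : β < omega1) :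
    (Set.Iic β).Countable := by
  have hsub : Set.Iic β ⊆ Set.Iio (β + 1) := by
    intro γ hγ
    exact lt_of_le_of_lt hγ (lt_add_one β)
  apply Set.Countable.mono hsub
  rw [← Cardinal.le_aleph0_iff_set_countable, Ordinal.mk_Iio_ordinal]
  have hlt : β + 1 < omega1 := by
    rw [Ordinal.add_one_eq_succ]
    exact (Cardinal.isSuccLimit_ord (Cardinal.aleph0_le_aleph 1)).succ_lt hβ
  rw [← Cardinal.lift_aleph0.{1,0}]
  exact Cardinal.lift_le.2 (st7_lt_omega1_iff.1 hlt)

/-- The set of nodes of height at most `β < ω₁` is countable. -/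
theorem st7_countable_le_height (t : OTree)
    (hcnt : ∀ α < omega1, (t.level α).Countable) {β : Ordinal} (hβ : β < omega1) :
    {x : t.carrier | t.height x ≤ β}.Countable := by
  have hset : {x : t.carrier | t.height x ≤ β} = ⋃ γ ∈ Set.Iic β, t.level γ := by
    ext x
    simp only [Set.mem_setOf_eq, Set.mem_iUnion, Set.mem_Iic]
    constructor
    · intro hx; exact ⟨t.height x, hx, rfl⟩
    · rintro ⟨γ, hγ, hx⟩
      have hxe : t.height x = γ := hx
      rw [hxe]; exact hγ
  rw [hset]
  apply Set.Countable.biUnion (st7_countable_Iic hβ)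
  intro γ hγ
  exact hcnt γ (lt_of_le_of_lt hγ hβ)

/-- A cofinal branch has an element at every level `β < ω₁`. -/
theorem st7_branch_exists_height (t : OTree) {f : Set t.carrier}
    (hf : IsMaxChain t.lt f) (hunc : ¬ f.Countable)
    (hh : ∀ x, t.height x < omega1)
    (hcnt : ∀ α < omega1, (t.level α).Countable)
    {β : Ordinal} (hβ : β < omega1) :
    ∃ z ∈ f, t.height z = β := by
  have hex : ∃ x ∈ f, β < t.height x := by
    by_contra hcon
    push_neg at hcon
    apply hunc
    apply Set.Countable.mono _ (st7_countable_le_height t hcnt hβ)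
    intro x hx
    exact hcon x hx
  obtain ⟨x, hx, hlt⟩ := hex
  obtain ⟨y, hyx, hy⟩ := st7_exists_pred t hlt
  exact ⟨y, st7_branch_downward t hf hx hyx, hy⟩

theorem st7_top_lt {β : Ordinal} (hβ : β < omega1) :
    Ordinal.omega0 * β + Ordinal.omega0 < omega1 := by
  rw [omega1, Cardinal.lt_ord]
  have hcb : β.card ≤ ℵ₀ := st7_lt_omega1_iff.1 hβ
  have hc : (Ordinal.omega0 * β + Ordinal.omega0).card ≤ ℵ₀ := by
    rw [Ordinal.card_add, Ordinal.card_mul, Ordinal.card_omega0]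
    calc ℵ₀ * β.card + ℵ₀ ≤ ℵ₀ * ℵ₀ + ℵ₀ := by
          gcongr
      _ = ℵ₀ + ℵ₀ := by rw [Cardinal.aleph0_mul_aleph0]
      _ = ℵ₀ := Cardinal.aleph0_add_aleph0
  exact lt_of_le_of_lt hc Cardinal.aleph0_lt_aleph_one

theorem st7_div_eq {β : Ordinal} (n : ℕ) :
    (Ordinal.omega0 * β + n) / Ordinal.omega0 = β := by
  rw [Ordinal.mul_add_div _ Ordinal.omega0_ne_zero,
    Ordinal.div_eq_zero_of_lt (Ordinal.nat_lt_omega0 n), add_zero]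

theorem st7_mod_eq {β : Ordinal} (n : ℕ) :
    (Ordinal.omega0 * β + n) % Ordinal.omega0 = n := by
  rw [Ordinal.mul_add_mod_self, Ordinal.mod_eq_of_lt (Ordinal.nat_lt_omega0 n)]

end St7Aux

/-- Every Kurepa tree `𝐓` admits a transversal `⟨t_α | α < ω₁⟩` such that for
every cofinal branch `f` the set `G(f) = {α < ω₁ | f ↾ α = t_α}` is uncountable. -/
theorem statement7 (t : OTree) (h1 : t.IsKurepa) :
    ∃ b : Ordinal → t.carrier,
      (∀ α < omega1, b α ∈ t.level α) ∧
      ∀ f ∈ t.branches,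
        ¬ ({α : Ordinal | α < omega1 ∧ f ∩ t.level α = {b α}}).Countable := by
  obtain ⟨⟨hh, hne, hcnt⟩, -⟩ := h1
  -- a default element of the carrier
  have hzero : (0 : Ordinal) < omega1 := by
    rw [omega1, Cardinal.lt_ord, Ordinal.card_zero]
    exact Cardinal.aleph_pos 1
  obtain ⟨x₀, -⟩ := hne 0 hzero
  -- enumerations of the top levels of the blocks
  have hlev : ∀ β : Ordinal, ∃ e : ℕ → t.carrier,
      β < omega1 → t.level (Ordinal.omega0 * β + Ordinal.omega0) = Set.range e := by
    intro β
    by_cases hβ : β < omega1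
    · obtain ⟨e, he⟩ := (hcnt _ (st7_top_lt hβ)).exists_eq_range (hne _ (st7_top_lt hβ))
      exact ⟨e, fun _ => he⟩
    · exact ⟨fun _ => x₀, fun h => absurd h hβ⟩
  choose E hE using hlev
  -- the natural number given by `α % ω`
  have hmod : ∀ α : Ordinal, ∃ n : ℕ, α % Ordinal.omega0 = n := fun α =>
    Ordinal.lt_omega0.1 (Ordinal.mod_lt α Ordinal.omega0_ne_zero)
  choose K hK using hmod
  -- `α < ω₁` implies `α / ω < ω₁`
  have hdivlt : ∀ α : Ordinal, α < omega1 → α / Ordinal.omega0 < omega1 := by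
    intro α hα
    exact lt_of_le_of_lt
      (Ordinal.div_le_of_le_mul (Ordinal.le_mul_right α Ordinal.omega0_pos)) hα
  -- the chosen node of the top level of the block of `α`
  have hZmem : ∀ α : Ordinal, α < omega1 →
      t.height (E (α / Ordinal.omega0) (K α)) =
        Ordinal.omega0 * (α / Ordinal.omega0) + Ordinal.omega0 := by
    intro α hα
    have hr : E (α / Ordinal.omega0) (K α) ∈
        Set.range (E (α / Ordinal.omega0)) := Set.mem_range_self _
    rw [← hE _ (hdivlt α hα)] at hr
    exact hr
  -- the transversal: the predecessor of the chosen top node at height `α`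
  have hbex : ∀ α : Ordinal, ∃ y : t.carrier, α < omega1 →
      (t.lt y (E (α / Ordinal.omega0) (K α)) ∧ t.height y = α) := by
    intro α
    by_cases hα : α < omega1
    · have hlt : α < t.height (E (α / Ordinal.omega0) (K α)) := by
        rw [hZmem α hα]
        conv_lhs => rw [← Ordinal.div_add_mod α Ordinal.omega0]
        exact (add_lt_add_iff_left _).2 (Ordinal.mod_lt α Ordinal.omega0_ne_zero)
      obtain ⟨y, hyz, hy⟩ := st7_exists_pred t hlt
      exact ⟨y, fun _ => ⟨hyz, hy⟩⟩
    · exact ⟨x₀, fun h => absurd h hα⟩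
  choose b hb using hbex
  refine ⟨b, fun α hα => (hb α hα).2, ?_⟩
  rintro f ⟨hmax, hunc⟩ hS
  apply hunc
  -- every block contributes an element of `G(f)`
  have key : ∀ β : Ordinal, β < omega1 → ∃ n : ℕ,
      (Ordinal.omega0 * β + n < omega1 ∧
        f ∩ t.level (Ordinal.omega0 * β + n) = {b (Ordinal.omega0 * β + n)}) := by
    intro β hβ
    obtain ⟨z, hzf, hzh⟩ :=
      st7_branch_exists_height t hmax hunc hh hcnt (st7_top_lt hβ)
    have hzr : z ∈ Set.range (E β) := by
      rw [← hE β hβ]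
      exact hzh
    obtain ⟨n, hn⟩ := hzr
    have hα : Ordinal.omega0 * β + n < omega1 :=
      lt_trans ((add_lt_add_iff_left _).2 (Ordinal.nat_lt_omega0 n)) (st7_top_lt hβ)
    have hbspec := hb (Ordinal.omega0 * β + n) hα
    rw [st7_div_eq n] at hbspec
    have hKn : K (Ordinal.omega0 * β + n) = n := by
      have h1 := hK (Ordinal.omega0 * β + n)
      rw [st7_mod_eq n] at h1
      exact_mod_cast h1.symm
    rw [hKn, hn] at hbspec
    have hbf : b (Ordinal.omega0 * β + n) ∈ f :=
      st7_branch_downward t hmax hzf hbspec.1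
    refine ⟨n, hα, ?_⟩
    ext w
    simp only [Set.mem_inter_iff, Set.mem_singleton_iff]
    constructor
    · rintro ⟨hwf, hwl⟩
      have hwh : t.height w = Ordinal.omega0 * β + n := hwl
      exact st7_height_inj t hmax.1 hwf hbf (hwh.trans hbspec.2.symm)
    · rintro rfl
      exact ⟨hbf, hbspec.2⟩
  choose N hN using key
  -- the set `G(f)` is countable, hence `Iio ω₁` is countable, hence `f` is countable
  haveI hSc : Countable ({α : Ordinal | α < omega1 ∧ f ∩ t.level α = {b α}} : Set Ordinal) :=
    hS.to_subtype
  have hinj : Function.Injective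
      (fun β : ↥(Set.Iio omega1) =>
        (⟨Ordinal.omega0 * β.1 + N β.1 β.2,
          (hN β.1 β.2).1, (hN β.1 β.2).2⟩ :
          ↥({α : Ordinal | α < omega1 ∧ f ∩ t.level α = {b α}} : Set Ordinal))) := by
    intro β₁ β₂ hβ
    have h1 : Ordinal.omega0 * β₁.1 + N β₁.1 β₁.2 =
        Ordinal.omega0 * β₂.1 + N β₂.1 β₂.2 := congrArg Subtype.val hβ
    have h2 : β₁.1 = β₂.1 := by
      have := congrArg (fun γ => γ / Ordinal.omega0) h1
      simpa only [st7_div_eq] using this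
    exact Subtype.ext h2
  haveI hIio : Countable ↥(Set.Iio omega1) := hinj.countable
  have hfinj : Function.Injective
      (fun x : ↥f => (⟨t.height x.1, hh x.1⟩ : ↥(Set.Iio omega1))) := by
    intro x y hxy
    have h1 : t.height x.1 = t.height y.1 := congrArg Subtype.val hxy
    exact Subtype.ext (st7_height_inj t hmax.1 x.2 y.2 h1)
  haveI : Countable ↥f := hfinj.countable
  exact Set.countable_coe_iff.1 this
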